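/- Assume Υ(0) = Υ₀ = n₀/(n₀+1) with n₀ ≥ 0, Υ(1) = 1, σ(0) = 0, σ(1) = γ₁ − 1 with 1 < γ₁ ≤ 2. Then each of the following points of [0,1]³ is a zero of the vector field F: B₁ = (0, (n₀+1)/(n₀+2), 0); B₂ = (0, 1, 0); B₃ = (1, 1, 0); T₁ = (0, 1, 1); T₂ = (1, 1, 1); T₃ = (1/2, 2/(2+γ₁²), 1); every point (1, 0, Ω), (3/4, 0, Ω) and (0, 0, Ω) with Ω ∈ [0,1]; every point (U, 1, 0) with U ∈ [0,1] in the case n₀ = 0; and, when n₀ > 3, the point B₄ = ((n₀−3)/(2(n₀−2)), (2n₀+2)/(3n₀+1), 0). -/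

import Mathlib

open Set

/-- `H(U,V,Ω) = (1+σ(Ω))V(1−U+σ(Ω)U)`. -/
noncomputable def Hfun (σ : ℝ → ℝ) (U V W : ℝ) : ℝ :=
  (1 + σ W) * V * (1 - U + σ W * U)

/-- The vector field `F` on the cube `[0,1]³` in coordinates `(U,V,Ω)`. -/
noncomputable def Ffield (Υ σ f : ℝ → ℝ) (U V W : ℝ) : ℝ × ℝ × ℝ :=
  (U * (1 - U) * ((1 - V) * (3 - 4 * U) - Υ W * Hfun σ U V W),
   V * (1 - V) * ((2 * U - 1) * (1 - V + 2 * σ W * V) + (1 - Υ W) * Hfun σ U V W),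
   -(f W) * W * (1 - W) * Hfun σ U V W)

/-- Under the stated boundary conditions on `Υ` and `σ`, the listed
points of `[0,1]³` are zeros of the vector field `F`. -/
theorem stmt1
    (Υ σ f : ℝ → ℝ)
    (hΥ : ContDiffOn ℝ 1 Υ (Icc 0 1)) (hσ : ContDiffOn ℝ 1 σ (Icc 0 1))
    (hf : ContDiffOn ℝ 1 f (Icc 0 1))
    (hfpos : ∀ x ∈ Icc (0:ℝ) 1, 0 < f x)
    (hσnonneg : ∀ x ∈ Icc (0:ℝ) 1, 0 ≤ σ x)
    (hΥnonneg : ∀ x ∈ Icc (0:ℝ) 1, 0 ≤ Υ x)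
    (n₀ γ₁ : ℝ) (hn₀ : 0 ≤ n₀) (hγ₁ : 1 < γ₁) (hγ₁' : γ₁ ≤ 2)
    (hΥ0 : Υ 0 = n₀ / (n₀ + 1)) (hΥ1 : Υ 1 = 1)
    (hσ0 : σ 0 = 0) (hσ1 : σ 1 = γ₁ - 1) :
    -- B₁
    Ffield Υ σ f 0 ((n₀ + 1) / (n₀ + 2)) 0 = 0 ∧
    -- B₂
    Ffield Υ σ f 0 1 0 = 0 ∧
    -- B₃
    Ffield Υ σ f 1 1 0 = 0 ∧
    -- T₁
    Ffield Υ σ f 0 1 1 = 0 ∧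
    -- T₂
    Ffield Υ σ f 1 1 1 = 0 ∧
    -- T₃
    Ffield Υ σ f (1 / 2) (2 / (2 + γ₁ ^ 2)) 1 = 0 ∧
    -- L₁, L₂, L₃
    (∀ W ∈ Icc (0:ℝ) 1,
      Ffield Υ σ f 1 0 W = 0 ∧ Ffield Υ σ f (3 / 4) 0 W = 0 ∧ Ffield Υ σ f 0 0 W = 0) ∧
    -- L₄ (only when n₀ = 0)
    (n₀ = 0 → ∀ U ∈ Icc (0:ℝ) 1, Ffield Υ σ f U 1 0 = 0) ∧
    -- B₄ (only when n₀ > 3)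
    (3 < n₀ →
      Ffield Υ σ f ((n₀ - 3) / (2 * (n₀ - 2))) ((2 * n₀ + 2) / (3 * n₀ + 1)) 0 = 0) := by

  have hn1 : n₀ + 1 ≠ 0 := by linarith
  have hn2 : n₀ + 2 ≠ 0 := by linarith
  have hγ : (2:ℝ) + γ₁ ^ 2 ≠ 0 := by nlinarith
  refine ⟨?_, ?_, ?_, ?_, ?_, ?_, ?_, ?_, ?_⟩
  · simp only [Ffield, Hfun, hσ0, hΥ0, Prod.mk_eq_zero]
    refine ⟨by ring, ?_, by ring⟩
    field_simp
    ring
  · simp only [Ffield, Hfun, hσ0, hΥ0, Prod.mk_eq_zero]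
    exact ⟨by ring, by ring, by ring⟩
  · simp only [Ffield, Hfun, hσ0, hΥ0, Prod.mk_eq_zero]
    exact ⟨by ring, by ring, by ring⟩
  · simp only [Ffield, Hfun, hσ1, hΥ1, Prod.mk_eq_zero]
    exact ⟨by ring, by ring, by ring⟩
  · simp only [Ffield, Hfun, hσ1, hΥ1, Prod.mk_eq_zero]
    exact ⟨by ring, by ring, by ring⟩
  · simp only [Ffield, Hfun, hσ1, hΥ1, Prod.mk_eq_zero]
    refine ⟨?_, by ring, by ring⟩
    field_simp
    ring
  · intro W _
    refine ⟨?_, ?_, ?_⟩ <;>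
      simp only [Ffield, Hfun, Prod.mk_eq_zero] <;>
      exact ⟨by ring, by ring, by ring⟩
  · intro h0 U _
    simp only [Ffield, Hfun, hσ0, hΥ0, h0, Prod.mk_eq_zero]
    refine ⟨by norm_num, by ring, by ring⟩
  · intro h3
    have hd : (2:ℝ) * (n₀ - 2) ≠ 0 := by intro h; nlinarith
    have hd2 : (3:ℝ) * n₀ + 1 ≠ 0 := by linarith
    have hd' : n₀ - 2 ≠ 0 := by intro h; linarith
    simp only [Ffield, Hfun, hσ0, hΥ0, Prod.mk_eq_zero]
    refine ⟨?_, ?_, by ring⟩ <;> (field_simp; ring)
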